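/- Assume P(lim_{|k|→∞} ‖Y_k‖ = 0) = 1. Then for every shift invariant nonnegative measurable functional K on E (i.e., K(Bx) = K(x) for all x), E[K(Y) · 1{sup_{j≤−1} ‖Y_j‖ ≤ 1}] = E[K(Y) · 1{I(Y) = 0}]. -/
import Mathlib


open MeasureTheory ProbabilityTheory Set Filter
open scoped ENNReal NNReal Topology

noncomputable section

/-- The iterated backshift operator: `(B^k x) j = x (j - k)`. -/
def backshift {V : Type*} (k : ℤ) (x : ℤ → V) : ℤ → V := fun j => x (j - k)

/-- `InfargmaxAt x j` is the event `I(x) = j` for the infargmax functional `I`: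
the first time the supremum of the norms is achieved is `j`, i.e.
`sup_{i<j} ‖x_i‖ < ‖x_j‖` and `sup_{i>j} ‖x_i‖ ≤ ‖x_j‖`.  (`I(x) ∈ ℤ` is then
expressed as `∃ j, InfargmaxAt x j`.) -/
def InfargmaxAt {V : Type*} [NormedAddCommGroup V] (x : ℤ → V) (j : ℤ) : Prop :=
  (⨆ i : {i : ℤ // i < j}, (‖x i.1‖₊ : ℝ≥0∞)) < (‖x j‖₊ : ℝ≥0∞) ∧
    (⨆ i : {i : ℤ // j < i}, (‖x i.1‖₊ : ℝ≥0∞)) ≤ (‖x j‖₊ : ℝ≥0∞)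

/-! ### Auxiliary material -/

set_option linter.unusedSectionVars false

section AuxPlain

variable {V : Type*}

lemma backshift_apply (k : ℤ) (x : ℤ → V) (j : ℤ) : backshift k x j = x (j - k) := rfl

lemma backshift_backshift (a b : ℤ) (x : ℤ → V) :
    backshift a (backshift b x) = backshift (a + b) x := by
  funext j
  simp [backshift, sub_sub]

lemma backshift_zero (x : ℤ → V) : backshift 0 x = x := by
  funext j; simp [backshift]

lemma measurable_backshift [MeasurableSpace V] (k : ℤ) :
    Measurable (backshift k : (ℤ → V) → (ℤ → V)) :=
  measurable_pi_lambda _ fun j => measurable_pi_apply _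

lemma map_backshift_int [MeasurableSpace V] (ν : Measure (ℤ → V))
    (h : ν.map (backshift 1) = ν) (k : ℤ) : ν.map (backshift k) = ν := by
  have hnat : ∀ n : ℕ, ν.map (backshift (n : ℤ)) = ν := by
    intro n
    induction n with
    | zero =>
      have hid : (backshift ((0:ℕ):ℤ) : (ℤ → V) → _) = id := funext backshift_zero
      rw [hid, Measure.map_id]
    | succ n ih =>
      have hco : (backshift ((n : ℤ) + 1) : (ℤ → V) → _)
          = backshift 1 ∘ backshift (n : ℤ) := by
        funext x; simpa [add_comm] using (backshift_backshift 1 (n : ℤ) x).symm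
      rw [show ((n + 1 : ℕ) : ℤ) = (n : ℤ) + 1 by push_cast; ring, hco,
        ← Measure.map_map (measurable_backshift 1) (measurable_backshift _), ih, h]
  rcases Int.eq_nat_or_neg k with ⟨n, rfl | rfl⟩
  · exact hnat n
  · have hco : (backshift (-(n : ℤ)) ∘ backshift (n : ℤ) : (ℤ → V) → _) = id := by
      funext x
      simp [Function.comp, backshift_backshift]
      exact backshift_zero x
    calc ν.map (backshift (-(n : ℤ)))
        = (ν.map (backshift (n : ℤ))).map (backshift (-(n : ℤ))) := by rw [hnat n]
      _ = ν.map (backshift (-(n : ℤ)) ∘ backshift (n : ℤ)) :=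
          Measure.map_map (measurable_backshift _) (measurable_backshift _)
      _ = ν := by rw [hco, Measure.map_id]

lemma lint_inter_ae {β : Type*} [MeasurableSpace β] {μ : Measure β} {t : Set β}
    (h : μ tᶜ = 0) (s : Set β) (f : β → ℝ≥0∞) :
    ∫⁻ x in s, f x ∂μ = ∫⁻ x in s ∩ t, f x ∂μ := by
  refine setLIntegral_congr (MeasureTheory.ae_eq_set.mpr ⟨?_, ?_⟩)
  · exact measure_mono_null (fun x hx => fun hxt => hx.2 ⟨hx.1, hxt⟩) h
  · have hempty : (s ∩ t) \ s = ∅ := by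
      ext x; simp only [mem_diff, mem_inter_iff, mem_empty_iff_false, iff_false]
      tauto
    rw [hempty]
    exact measure_empty

end AuxPlain

/-- The set of sequences whose norms tend to `0` at `±∞`. -/
def TendSet (V : Type*) [NormedAddCommGroup V] : Set (ℤ → V) :=
  {y | Tendsto (fun k : ℤ => ‖y k‖) cofinite (𝓝 0)}

/-- The event that the first exceedance of level `1` happens at time `m`. -/
def FEset {V : Type*} [NormedAddCommGroup V] (m : ℤ) : Set (ℤ → V) :=
  {y | 1 < ‖y m‖ ∧ ∀ j < m, ‖y j‖ ≤ 1}

/-- The event `I(y) = j`. -/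
def IAset {V : Type*} [NormedAddCommGroup V] (j : ℤ) : Set (ℤ → V) :=
  {y | InfargmaxAt y j}

section AuxST

variable {V : Type*} [NormedAddCommGroup V]

lemma mem_FEset {y : ℤ → V} {m : ℤ} :
    y ∈ FEset m ↔ 1 < ‖y m‖ ∧ ∀ j < m, ‖y j‖ ≤ 1 := Iff.rfl

lemma mem_IAset {y : ℤ → V} {j : ℤ} : y ∈ IAset j ↔ InfargmaxAt y j := Iff.rfl

lemma infargmaxAt_backshift (k j : ℤ) (x : ℤ → V) :
    InfargmaxAt (backshift k x) j ↔ InfargmaxAt x (j - k) := by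
  have h1 : (⨆ i : {i : ℤ // i < j}, (‖backshift k x i.1‖₊ : ℝ≥0∞))
      = ⨆ i : {i : ℤ // i < j - k}, (‖x i.1‖₊ : ℝ≥0∞) := by
    apply le_antisymm
    · exact iSup_le fun i => le_iSup_of_le ⟨i.1 - k, by omega⟩ (by simp [backshift])
    · exact iSup_le fun i => le_iSup_of_le ⟨i.1 + k, by omega⟩
        (by simp [backshift])
  have h2 : (⨆ i : {i : ℤ // j < i}, (‖backshift k x i.1‖₊ : ℝ≥0∞))
      = ⨆ i : {i : ℤ // j - k < i}, (‖x i.1‖₊ : ℝ≥0∞) := by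
    apply le_antisymm
    · exact iSup_le fun i => le_iSup_of_le ⟨i.1 - k, by omega⟩ (by simp [backshift])
    · exact iSup_le fun i => le_iSup_of_le ⟨i.1 + k, by omega⟩
        (by simp [backshift])
  unfold InfargmaxAt
  rw [h1, h2, backshift_apply]

lemma infargmaxAt_unique {x : ℤ → V} {j l : ℤ}
    (hj : InfargmaxAt x j) (hl : InfargmaxAt x l) : j = l := by
  by_contra hne
  wlog hlt : j < l generalizing j l
  · exact this hl hj (Ne.symm hne) (by omega)
  have h1 : (‖x l‖₊ : ℝ≥0∞) ≤ ⨆ i : {i : ℤ // j < i}, (‖x i.1‖₊ : ℝ≥0∞) :=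
    le_iSup (fun i : {i : ℤ // j < i} => (‖x i.1‖₊ : ℝ≥0∞)) ⟨l, hlt⟩
  have h2 : (‖x j‖₊ : ℝ≥0∞) ≤ ⨆ i : {i : ℤ // i < l}, (‖x i.1‖₊ : ℝ≥0∞) :=
    le_iSup (fun i : {i : ℤ // i < l} => (‖x i.1‖₊ : ℝ≥0∞)) ⟨j, hlt⟩
  exact absurd (((h1.trans hj.2).trans h2).trans_lt hl.1) (lt_irrefl _)

lemma finite_exceed {y : ℤ → V}
    (hy : Tendsto (fun k : ℤ => ‖y k‖) cofinite (𝓝 0)) {c : ℝ} (hc : 0 < c) :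
    {i : ℤ | c ≤ ‖y i‖}.Finite := by
  have h := Filter.eventually_cofinite.mp (hy (Iio_mem_nhds hc))
  exact h.subset fun i hi => by simpa [not_lt] using hi

lemma exists_infargmax {y : ℤ → V}
    (hy : Tendsto (fun k : ℤ => ‖y k‖) cofinite (𝓝 0)) (h0 : 1 < ‖y 0‖) :
    ∃ j : ℤ, InfargmaxAt y j ∧ 1 < ‖y j‖ := by
  classical
  have hGfin : {i : ℤ | 1 ≤ ‖y i‖}.Finite := finite_exceed hy one_pos
  set G : Finset ℤ := hGfin.toFinset with hG
  have h0G : (0 : ℤ) ∈ G := by simp [hG, hGfin.mem_toFinset]; linarith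
  obtain ⟨i₀, hi₀G, hi₀⟩ := G.exists_max_image (fun i => ‖y i‖) ⟨0, h0G⟩
  have hMall : ∀ i : ℤ, ‖y i‖ ≤ ‖y i₀‖ := by
    intro i
    by_cases h : i ∈ G
    · exact hi₀ i h
    · have : ¬ (1 : ℝ) ≤ ‖y i‖ := by simpa [hG, hGfin.mem_toFinset] using h
      have h1 : (1:ℝ) ≤ ‖y i₀‖ := le_trans h0.le (hi₀ 0 h0G)
      linarith
  set S : Finset ℤ := G.filter (fun i => ‖y i₀‖ ≤ ‖y i‖) with hS
  have hi₀S : i₀ ∈ S := Finset.mem_filter.mpr ⟨hi₀G, le_refl _⟩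
  set j := S.min' ⟨i₀, hi₀S⟩ with hj
  have hjS : j ∈ S := Finset.min'_mem _ _
  have hjnorm : ‖y j‖ = ‖y i₀‖ :=
    le_antisymm (hMall j) (Finset.mem_filter.mp hjS).2
  have hj1 : 1 < ‖y j‖ := lt_of_lt_of_le h0 (hjnorm ▸ hMall 0)
  refine ⟨j, ⟨?_, ?_⟩, hj1⟩
  · -- strict sup below j
    set t : Finset ℤ := G.filter (fun i => i < j) with ht
    have hbound : (⨆ i : {i : ℤ // i < j}, (‖y i.1‖₊ : ℝ≥0∞))
        ≤ max 1 (t.sup (fun i => (‖y i‖₊ : ℝ≥0∞))) := by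
      refine iSup_le fun i => ?_
      by_cases h : i.1 ∈ G
      · have hmem : i.1 ∈ t := Finset.mem_filter.mpr ⟨h, i.2⟩
        exact le_max_of_le_right
          (Finset.le_sup (f := fun i => (‖y i‖₊ : ℝ≥0∞)) hmem)
      · have hlt : ¬ (1:ℝ) ≤ ‖y i.1‖ := by simpa [hG, hGfin.mem_toFinset] using h
        refine le_max_of_le_left ?_
        have : ‖y i.1‖₊ ≤ 1 := by
          rw [← NNReal.coe_le_coe]
          push_cast
          linarith
        exact_mod_cast this
    refine lt_of_le_of_lt hbound ?_
    have h1lt : (1 : ℝ≥0∞) < (‖y j‖₊ : ℝ≥0∞) := by exact_mod_cast hj1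
    refine max_lt h1lt ?_
    refine Finset.sup_lt_iff (lt_trans zero_lt_one h1lt) |>.mpr ?_
    intro i hi
    have hiG : i ∈ G := (Finset.mem_filter.mp hi).1
    have hij : i < j := (Finset.mem_filter.mp hi).2
    have hlt : ‖y i‖ < ‖y j‖ := by
      rcases lt_or_ge ‖y i‖ ‖y i₀‖ with h | h
      · exact hjnorm ▸ h
      · exfalso
        have hiS : i ∈ S := Finset.mem_filter.mpr ⟨hiG, h⟩
        exact absurd (S.min'_le i hiS) (by omega)
    exact_mod_cast hlt
  · refine iSup_le fun i => ?_
    have h' : ‖y i.1‖ ≤ ‖y j‖ := hjnorm ▸ hMall i.1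
    exact_mod_cast h'

lemma exists_fe {y : ℤ → V}
    (hy : Tendsto (fun k : ℤ => ‖y k‖) cofinite (𝓝 0)) (h0 : 1 < ‖y 0‖) :
    ∃ m : ℤ, m ≤ 0 ∧ 1 < ‖y m‖ ∧ ∀ j < m, ‖y j‖ ≤ 1 := by
  classical
  have hGfin : {i : ℤ | 1 ≤ ‖y i‖}.Finite := finite_exceed hy one_pos
  have hFfin : {i : ℤ | 1 < ‖y i‖}.Finite := hGfin.subset fun i hi => by
    simp only [Set.mem_setOf_eq] at hi ⊢; exact le_of_lt hi
  set F : Finset ℤ := hFfin.toFinset with hF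
  have h0F : (0 : ℤ) ∈ F := by simpa [hF, hFfin.mem_toFinset] using h0
  set m := F.min' ⟨0, h0F⟩ with hm
  have hmF : m ∈ F := F.min'_mem _
  refine ⟨m, F.min'_le 0 h0F, by simpa [hF, hFfin.mem_toFinset] using hmF, ?_⟩
  intro j hj
  by_contra h
  push_neg at h
  have hjF : j ∈ F := by simpa [hF, hFfin.mem_toFinset] using h
  exact absurd (F.min'_le j hjF) (by omega)

lemma fe_unique {y : ℤ → V} {m m' : ℤ}
    (h : y ∈ FEset m) (h' : y ∈ FEset m') : m = m' := by
  by_contra hne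
  rcases lt_or_gt_of_ne hne with hlt | hlt
  · exact absurd (h'.2 m hlt) (not_le.mpr h.1)
  · exact absurd (h.2 m' hlt) (not_le.mpr h'.1)

lemma mem_tendSet_iff {y : ℤ → V} :
    y ∈ TendSet V ↔ ∀ n : ℕ, ∃ N : ℕ, ∀ k : ℤ, (N : ℤ) ≤ |k| → ‖y k‖ < 1 / (n + 1) := by
  constructor
  · intro hy n
    have hε : (0 : ℝ) < 1 / (n + 1) := by positivity
    have hfin := finite_exceed hy hε
    classical
    set t := hfin.toFinset with ht
    refine ⟨t.sup (fun k => k.natAbs) + 1, fun k hk => ?_⟩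
    by_contra h
    push_neg at h
    have hkt : k ∈ t := by simpa [ht, hfin.mem_toFinset] using h
    have h1 : k.natAbs ≤ t.sup (fun k => k.natAbs) :=
      Finset.le_sup (f := fun k : ℤ => k.natAbs) hkt
    have h2 : |k| = (k.natAbs : ℤ) := Int.abs_eq_natAbs k
    omega
  · intro h
    rw [TendSet, mem_setOf_eq, Metric.tendsto_nhds]
    intro ε hε
    obtain ⟨n, hn⟩ := exists_nat_one_div_lt hε
    obtain ⟨N, hN⟩ := h n
    rw [eventually_cofinite]
    refine (Set.finite_Icc (-(N : ℤ)) N).subset fun k hk => ?_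
    simp only [mem_setOf_eq, not_lt] at hk
    by_contra hmem
    have habs : (N : ℤ) ≤ |k| := by
      rw [mem_Icc] at hmem
      rcases abs_cases k with ⟨h1, h2⟩ | ⟨h1, h2⟩ <;> omega
    rw [Real.dist_eq, sub_zero, abs_of_nonneg (norm_nonneg _)] at hk
    have hlt : (1 : ℝ) / (n + 1) < ε := by exact_mod_cast hn
    linarith [hN k habs]

lemma zero_mem_tendSet : (0 : ℤ → V) ∈ TendSet V := by
  have h : (fun k : ℤ => ‖(0 : ℤ → V) k‖) = fun _ => (0 : ℝ) := by
    funext k; simp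
  rw [TendSet, mem_setOf_eq, h]
  exact tendsto_const_nhds

lemma tendSet_smul_mem [NormedSpace ℝ V] {c : ℝ} (hc : 0 < c) {y : ℤ → V}
    (hy : y ∈ TendSet V) : c • y ∈ TendSet V := by
  have hfun : (fun k : ℤ => ‖(c • y) k‖) = fun k => c * ‖y k‖ := by
    funext k; simp [norm_smul, abs_of_pos hc]
  rw [TendSet, mem_setOf_eq, hfun]
  simpa using (hy.const_mul c)

lemma tendSet_smul_iff [NormedSpace ℝ V] {c : ℝ} (hc : 0 < c) {y : ℤ → V} :
    c • y ∈ TendSet V ↔ y ∈ TendSet V := by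
  refine ⟨fun h => ?_, tendSet_smul_mem hc⟩
  have h2 := tendSet_smul_mem (inv_pos.mpr hc) h
  rwa [smul_smul, inv_mul_cancel₀ hc.ne', one_smul] at h2

lemma tendSet_backshift_mem {k : ℤ} {y : ℤ → V} (hy : y ∈ TendSet V) :
    backshift k y ∈ TendSet V := by
  have he : Function.Injective (fun j : ℤ => j - k) := fun a b hab => by
    have h : a - k = b - k := hab
    omega
  exact hy.comp he.tendsto_cofinite

lemma tendSet_backshift_iff {k : ℤ} {y : ℤ → V} :
    backshift k y ∈ TendSet V ↔ y ∈ TendSet V := by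
  refine ⟨fun h => ?_, tendSet_backshift_mem⟩
  have h2 := tendSet_backshift_mem (k := -k) h
  rwa [backshift_backshift, neg_add_cancel, backshift_zero] at h2

variable [MeasurableSpace V] [OpensMeasurableSpace V]

lemma measurableSet_tendSet : MeasurableSet (TendSet V) := by
  have hset : TendSet V = ⋂ n : ℕ, ⋃ N : ℕ, ⋂ k : ℤ,
      ⋂ _ : (N : ℤ) ≤ |k|, {y : ℤ → V | ‖y k‖ < 1 / (n + 1)} := by
    ext y
    simp only [mem_iInter, mem_iUnion, mem_setOf_eq]
    exact mem_tendSet_iff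
  rw [hset]
  exact MeasurableSet.iInter fun n => MeasurableSet.iUnion fun N =>
    MeasurableSet.iInter fun k => MeasurableSet.iInter fun _ =>
      measurableSet_lt ((measurable_pi_apply k).norm) measurable_const

lemma measurableSet_IAset (j : ℤ) : MeasurableSet (IAset j : Set (ℤ → V)) := by
  have hB : Measurable fun y : ℤ → V => (‖y j‖₊ : ℝ≥0∞) :=
    (measurable_pi_apply j).nnnorm.coe_nnreal_ennreal
  have hA : Measurable fun y : ℤ → V => ⨆ i : {i : ℤ // i < j}, (‖y i.1‖₊ : ℝ≥0∞) :=
    Measurable.iSup fun i => (measurable_pi_apply i.1).nnnorm.coe_nnreal_ennreal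
  have hC : Measurable fun y : ℤ → V => ⨆ i : {i : ℤ // j < i}, (‖y i.1‖₊ : ℝ≥0∞) :=
    Measurable.iSup fun i => (measurable_pi_apply i.1).nnnorm.coe_nnreal_ennreal
  have hseteq : (IAset j : Set (ℤ → V))
      = {y : ℤ → V | (⨆ i : {i : ℤ // i < j}, (‖y i.1‖₊ : ℝ≥0∞)) < (‖y j‖₊ : ℝ≥0∞)}
        ∩ {y : ℤ → V | (⨆ i : {i : ℤ // j < i}, (‖y i.1‖₊ : ℝ≥0∞)) ≤ (‖y j‖₊ : ℝ≥0∞)} := rfl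
  rw [hseteq]
  exact (measurableSet_lt hA hB).inter (measurableSet_le hC hB)

lemma measurableSet_FEset (m : ℤ) : MeasurableSet (FEset m : Set (ℤ → V)) := by
  have h1 : MeasurableSet {y : ℤ → V | 1 < ‖y m‖} :=
    measurableSet_lt measurable_const (measurable_pi_apply m).norm
  have h2 : MeasurableSet {y : ℤ → V | ∀ j < m, ‖y j‖ ≤ 1} := by
    have hseteq : {y : ℤ → V | ∀ j < m, ‖y j‖ ≤ 1}
        = ⋂ j : ℤ, ⋂ _ : j < m, {y : ℤ → V | ‖y j‖ ≤ 1} := by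
      ext y; simp only [mem_iInter, mem_setOf_eq]
    rw [hseteq]
    exact MeasurableSet.iInter fun j => MeasurableSet.iInter fun _ =>
      measurableSet_le (measurable_pi_apply j).norm measurable_const
  exact (h1.inter h2 : _)

end AuxST

/-- **First-exceedance / infargmax identity.**  If `P(lim_{|k|→∞} ‖Y_k‖ = 0) = 1`, then
for every shift invariant nonnegative measurable `K` on `E`,
`E[K(Y) 1{sup_{j≤−1} ‖Y_j‖ ≤ 1}] = E[K(Y) 1{I(Y) = 0}]`. -/
theorem statement10
    -- `V` plays the role of `ℝ^d` (`d ≥ 1`) equipped with an arbitrary norm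
    {V : Type*} [NormedAddCommGroup V] [NormedSpace ℝ V] [FiniteDimensional ℝ V]
    [Nontrivial V] [MeasurableSpace V] [BorelSpace V]
    (α : ℝ) (hα : 0 < α)
    -- the tail measure and its properties
    (ν : Measure (ℤ → V))
    (hν0 : ν {0} = 0)
    (hν1 : ν {y : ℤ → V | 1 < ‖y 0‖} = 1)
    (hνshift : ν.map (backshift 1) = ν)
    (hνhom : ∀ A : Set (ℤ → V), MeasurableSet A → ∀ c : ℝ, 0 < c →
      ν ((fun x => c • x) '' A) = ENNReal.ofReal (c ^ (-α)) * ν A)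
    -- the tail process `Y` and the spectral tail process `Θ`
    {Ω : Type*} [MeasurableSpace Ω] (P : Measure Ω) [IsProbabilityMeasure P]
    (Y : Ω → ℤ → V) (hYmeas : Measurable Y)
    (hYlaw : P.map Y = ν.restrict {y : ℤ → V | 1 < ‖y 0‖})
    (Θ : Ω → ℤ → V) (hΘdef : ∀ ω, Θ ω = ‖Y ω 0‖⁻¹ • Y ω)
    (hPareto : ∀ u : ℝ, 1 ≤ u → P {ω | u < ‖Y ω 0‖} = ENNReal.ofReal (u ^ (-α)))
    (hindep : IndepFun (fun ω => ‖Y ω 0‖) Θ P)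
    (hpolar : ∀ H : (ℤ → V) → ℝ≥0∞, Measurable H →
      ∫⁻ y in {y : ℤ → V | y 0 ≠ 0}, H y ∂ν
        = ∫⁻ r in Ioi (0 : ℝ),
            (∫⁻ ω, H (r • Θ ω) ∂P) * ENNReal.ofReal (α * r ^ (-α - 1)))
    -- the statement
    (hY0 : P {ω | Tendsto (fun k : ℤ => ‖Y ω k‖) cofinite (𝓝 0)} = 1)
    (K : (ℤ → V) → ℝ≥0∞) (hK : Measurable K)
    (hKshift : ∀ x, K (backshift 1 x) = K x) :
    ∫⁻ ω in {ω | ∀ j : ℤ, j ≤ -1 → ‖Y ω j‖ ≤ 1}, K (Y ω) ∂P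
      = ∫⁻ ω in {ω | InfargmaxAt (Y ω) 0}, K (Y ω) ∂P := by
  classical
  -- ### Step 1: the complement of the tendsto-to-zero set is `ν`-null
  have hUmeas : MeasurableSet {y : ℤ → V | 1 < ‖y 0‖} :=
    measurableSet_lt measurable_const (measurable_pi_apply 0).norm
  have hTmeas : MeasurableSet (TendSet V) := measurableSet_tendSet
  have hPT : P (Y ⁻¹' TendSet V) = 1 := hY0
  have hmapTc : (P.map Y) (TendSet V)ᶜ = 0 := by
    rw [Measure.map_apply hYmeas hTmeas.compl]
    have hpre : Y ⁻¹' (TendSet V)ᶜ = (Y ⁻¹' TendSet V)ᶜ := rfl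
    rw [hpre, measure_compl (hYmeas hTmeas) (measure_ne_top _ _), hPT, measure_univ,
      tsub_self]
  have hνUTc : ν ((TendSet V)ᶜ ∩ {y : ℤ → V | 1 < ‖y 0‖}) = 0 := by
    have h := hmapTc
    rwa [hYlaw, Measure.restrict_apply hTmeas.compl] at h
  have hscale : ∀ c : ℝ, 0 < c → ν ({y : ℤ → V | c < ‖y 0‖} ∩ (TendSet V)ᶜ) = 0 := by
    intro c hc
    have himg : (fun x : ℤ → V => c • x) '' ({y : ℤ → V | 1 < ‖y 0‖} ∩ (TendSet V)ᶜ)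
        = {y : ℤ → V | c < ‖y 0‖} ∩ (TendSet V)ᶜ := by
      ext y
      constructor
      · rintro ⟨z, ⟨hz1, hz2⟩, rfl⟩
        simp only [mem_setOf_eq] at hz1
        refine ⟨?_, fun hmem => hz2 ((tendSet_smul_iff hc).mp hmem)⟩
        have hnorm : ‖(c • z) 0‖ = c * ‖z 0‖ := by
          rw [Pi.smul_apply, norm_smul, Real.norm_eq_abs, abs_of_pos hc]
        show c < ‖(c • z) 0‖
        rw [hnorm]
        nlinarith
      · rintro ⟨hy1, hy2⟩
        simp only [mem_setOf_eq] at hy1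
        refine ⟨c⁻¹ • y, ⟨?_, fun hmem => hy2 ((tendSet_smul_iff (inv_pos.mpr hc)).mp hmem)⟩, ?_⟩
        · have hnorm : ‖(c⁻¹ • y) 0‖ = c⁻¹ * ‖y 0‖ := by
            rw [Pi.smul_apply, norm_smul, Real.norm_eq_abs, abs_of_pos (inv_pos.mpr hc)]
          show (1 : ℝ) < ‖(c⁻¹ • y) 0‖
          rw [hnorm]
          rw [lt_inv_mul_iff₀ hc, mul_one]
          exact hy1
        · show c • c⁻¹ • y = y
          rw [smul_smul, mul_inv_cancel₀ hc.ne', one_smul]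
    have h := hνhom ({y : ℤ → V | 1 < ‖y 0‖} ∩ (TendSet V)ᶜ)
      (hUmeas.inter hTmeas.compl) c hc
    rw [himg] at h
    rw [h, inter_comm {y : ℤ → V | 1 < ‖y 0‖} (TendSet V)ᶜ, hνUTc, mul_zero]
  have hν0Tc : ν ({y : ℤ → V | y 0 ≠ 0} ∩ (TendSet V)ᶜ) = 0 := by
    have hsub : {y : ℤ → V | y 0 ≠ 0} ∩ (TendSet V)ᶜ
        ⊆ ⋃ n : ℕ, ({y : ℤ → V | 1 / ((n : ℝ) + 1) < ‖y 0‖} ∩ (TendSet V)ᶜ) := by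
      rintro y ⟨hy1, hy2⟩
      have hpos : 0 < ‖y 0‖ := norm_pos_iff.mpr hy1
      obtain ⟨n, hn⟩ := exists_nat_one_div_lt hpos
      exact mem_iUnion.mpr ⟨n, ⟨by exact_mod_cast hn, hy2⟩⟩
    exact measure_mono_null hsub
      (measure_iUnion_null fun n => hscale _ (by positivity))
  have hνkTc : ∀ k : ℤ, ν ({y : ℤ → V | y k ≠ 0} ∩ (TendSet V)ᶜ) = 0 := by
    intro k
    have hmap := map_backshift_int ν hνshift (-k)
    have hkmeas : MeasurableSet ({y : ℤ → V | y 0 ≠ 0} ∩ (TendSet V)ᶜ) := by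
      refine MeasurableSet.inter ?_ hTmeas.compl
      exact (measurableSet_eq_fun (measurable_pi_apply 0) measurable_const).compl
    have happ : ν ({y : ℤ → V | y 0 ≠ 0} ∩ (TendSet V)ᶜ)
        = ν ((backshift (-k)) ⁻¹' ({y : ℤ → V | y 0 ≠ 0} ∩ (TendSet V)ᶜ)) := by
      conv_lhs => rw [← hmap]
      exact Measure.map_apply (measurable_backshift (-k)) hkmeas
    have hpre : (backshift (-k)) ⁻¹' ({y : ℤ → V | y 0 ≠ 0} ∩ (TendSet V)ᶜ)
        = {y : ℤ → V | y k ≠ 0} ∩ (TendSet V)ᶜ := by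
      ext y
      simp only [mem_preimage, mem_inter_iff, mem_setOf_eq, mem_compl_iff,
        backshift_apply, zero_sub, neg_neg, tendSet_backshift_iff]
    rw [hpre] at happ
    rw [← happ]
    exact hν0Tc
  have hTc : ν (TendSet V)ᶜ = 0 := by
    have hsub : (TendSet V)ᶜ
        ⊆ {(0 : ℤ → V)} ∪ ⋃ k : ℤ, ({y : ℤ → V | y k ≠ 0} ∩ (TendSet V)ᶜ) := by
      intro y hy
      by_cases h : y = 0
      · exact Or.inl (by simp [h])
      · have hk : ∃ k : ℤ, y k ≠ 0 := by
          by_contra hall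
          push_neg at hall
          exact h (funext hall)
        obtain ⟨k, hk⟩ := hk
        exact Or.inr (mem_iUnion.mpr ⟨k, hk, hy⟩)
    refine measure_mono_null hsub ?_
    exact measure_union_null hν0 (measure_iUnion_null hνkTc)
  -- ### Step 2: transfer both sides to integrals against `ν`
  have hS1meas : MeasurableSet {y : ℤ → V | ∀ j : ℤ, j ≤ -1 → ‖y j‖ ≤ 1} := by
    have hseteq : {y : ℤ → V | ∀ j : ℤ, j ≤ -1 → ‖y j‖ ≤ 1}
        = ⋂ j : ℤ, ⋂ _ : j ≤ -1, {y : ℤ → V | ‖y j‖ ≤ 1} := by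
      ext y; simp only [mem_iInter, mem_setOf_eq]
    rw [hseteq]
    exact MeasurableSet.iInter fun j => MeasurableSet.iInter fun _ =>
      measurableSet_le (measurable_pi_apply j).norm measurable_const
  have hLHS : ∫⁻ ω in {ω | ∀ j : ℤ, j ≤ -1 → ‖Y ω j‖ ≤ 1}, K (Y ω) ∂P
      = ∫⁻ y in FEset 0 ∩ TendSet V, K y ∂ν := by
    have hpre : {ω | ∀ j : ℤ, j ≤ -1 → ‖Y ω j‖ ≤ 1}
        = Y ⁻¹' {y : ℤ → V | ∀ j : ℤ, j ≤ -1 → ‖y j‖ ≤ 1} := rfl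
    rw [hpre, ← setLIntegral_map hS1meas hK hYmeas, hYlaw,
      Measure.restrict_restrict hS1meas]
    have hseteq : {y : ℤ → V | ∀ j : ℤ, j ≤ -1 → ‖y j‖ ≤ 1}
        ∩ {y : ℤ → V | 1 < ‖y 0‖} = FEset 0 := by
      ext y
      simp only [FEset, mem_inter_iff, mem_setOf_eq]
      constructor
      · rintro ⟨h1, h2⟩
        exact ⟨h2, fun j hj => h1 j (by omega)⟩
      · rintro ⟨h1, h2⟩
        exact ⟨fun j hj => h2 j (by omega), h1⟩
    rw [hseteq]
    exact lint_inter_ae hTc _ K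
  have hRHS : ∫⁻ ω in {ω | InfargmaxAt (Y ω) 0}, K (Y ω) ∂P
      = ∫⁻ y in IAset 0 ∩ {y : ℤ → V | 1 < ‖y 0‖} ∩ TendSet V, K y ∂ν := by
    have hpre : {ω | InfargmaxAt (Y ω) 0} = Y ⁻¹' (IAset 0) := rfl
    rw [hpre, ← setLIntegral_map (measurableSet_IAset 0) hK hYmeas, hYlaw,
      Measure.restrict_restrict (measurableSet_IAset 0)]
    exact lint_inter_ae hTc _ K
  -- ### Step 3: decompose into first-exceedance / infargmax pieces
  have hdecomp1 : FEset 0 ∩ TendSet V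
      = ⋃ k : ℕ, (FEset 0 ∩ IAset (k : ℤ) ∩ TendSet V) := by
    ext y
    simp only [mem_iUnion, mem_inter_iff]
    constructor
    · rintro ⟨hfe, ht⟩
      obtain ⟨j, hj, hj1⟩ := exists_infargmax ht hfe.1
      have hj0 : 0 ≤ j := by
        by_contra hneg
        push_neg at hneg
        exact absurd (hfe.2 j hneg) (not_le.mpr hj1)
      refine ⟨j.toNat, ⟨hfe, ?_⟩, ht⟩
      rw [mem_IAset, Int.toNat_of_nonneg hj0]
      exact hj
    · rintro ⟨k, ⟨hfe, _⟩, ht⟩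
      exact ⟨hfe, ht⟩
  have hdecomp2 : IAset 0 ∩ {y : ℤ → V | 1 < ‖y 0‖} ∩ TendSet V
      = ⋃ k : ℕ, (FEset (-(k : ℤ)) ∩ IAset 0 ∩ TendSet V) := by
    ext y
    simp only [mem_iUnion, mem_inter_iff]
    constructor
    · rintro ⟨⟨hia, hy0⟩, ht⟩
      simp only [mem_setOf_eq] at hy0
      obtain ⟨m, hm0, hm1, hm2⟩ := exists_fe ht hy0
      refine ⟨(-m).toNat, ⟨?_, hia⟩, ht⟩
      have hmm : (-(((-m).toNat : ℤ))) = m := by omega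
      rw [mem_FEset, hmm]
      exact ⟨hm1, hm2⟩
    · rintro ⟨k, ⟨hfe, hia⟩, ht⟩
      refine ⟨⟨hia, ?_⟩, ht⟩
      simp only [mem_setOf_eq]
      rcases Nat.eq_zero_or_pos k with rfl | hk
      · simpa using hfe.1
      · have hneg : (-(k : ℤ)) < 0 := by
          have : (0 : ℤ) < (k : ℤ) := by exact_mod_cast hk
          omega
        have h1 : (‖y (-(k : ℤ))‖₊ : ℝ≥0∞)
            ≤ ⨆ i : {i : ℤ // i < 0}, (‖y i.1‖₊ : ℝ≥0∞) :=
          le_iSup (fun i : {i : ℤ // i < 0} => (‖y i.1‖₊ : ℝ≥0∞)) ⟨-(k : ℤ), hneg⟩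
        have h2 : (‖y (-(k : ℤ))‖₊ : ℝ≥0∞) < (‖y 0‖₊ : ℝ≥0∞) := h1.trans_lt hia.1
        have h3 : (1 : ℝ≥0∞) < (‖y (-(k : ℤ))‖₊ : ℝ≥0∞) := by exact_mod_cast hfe.1
        have h4 := h3.trans h2
        exact_mod_cast h4
  have hmeasD1 : ∀ k : ℕ, MeasurableSet (FEset 0 ∩ IAset (k : ℤ) ∩ TendSet V) :=
    fun k => ((measurableSet_FEset 0).inter (measurableSet_IAset _)).inter
      measurableSet_tendSet
  have hmeasD2 : ∀ k : ℕ, MeasurableSet (FEset (-(k : ℤ)) ∩ IAset 0 ∩ TendSet V) :=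
    fun k => ((measurableSet_FEset _).inter (measurableSet_IAset 0)).inter
      measurableSet_tendSet
  have hdisj1 : Pairwise (Function.onFun Disjoint
      fun k : ℕ => FEset 0 ∩ IAset (k : ℤ) ∩ TendSet V) := by
    intro k l hkl
    refine Set.disjoint_left.mpr ?_
    rintro y ⟨⟨_, hk⟩, _⟩ ⟨⟨_, hl⟩, _⟩
    exact hkl (by exact_mod_cast infargmaxAt_unique hk hl)
  have hdisj2 : Pairwise (Function.onFun Disjoint
      fun k : ℕ => FEset (-(k : ℤ)) ∩ IAset 0 ∩ TendSet V) := by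
    intro k l hkl
    refine Set.disjoint_left.mpr ?_
    rintro y ⟨⟨hk, _⟩, _⟩ ⟨⟨hl, _⟩, _⟩
    have hmm := fe_unique hk hl
    exact hkl (by omega)
  -- ### Step 4: termwise identity using shift invariance
  have hKk : ∀ (n : ℕ) (x : ℤ → V), K (backshift (n : ℤ) x) = K x := by
    intro n
    induction n with
    | zero => intro x; rw [Int.natCast_zero, backshift_zero]
    | succ n ih =>
      intro x
      have hsh : backshift ((n + 1 : ℕ) : ℤ) x = backshift 1 (backshift (n : ℤ) x) := by
        rw [backshift_backshift]
        congr 1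
        push_cast
        ring
      rw [hsh, hKshift, ih]
  have hterm : ∀ k : ℕ, ∫⁻ y in FEset 0 ∩ IAset (k : ℤ) ∩ TendSet V, K y ∂ν
      = ∫⁻ y in FEset (-(k : ℤ)) ∩ IAset 0 ∩ TendSet V, K y ∂ν := by
    intro k
    have hmemiff : ∀ y : ℤ → V,
        backshift (k : ℤ) y ∈ FEset 0 ∩ IAset (k : ℤ) ∩ TendSet V
          ↔ y ∈ FEset (-(k : ℤ)) ∩ IAset 0 ∩ TendSet V := by
      intro y
      have hFE : backshift (k : ℤ) y ∈ FEset 0 ↔ y ∈ FEset (-(k : ℤ)) := by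
        constructor
        · rintro ⟨h1, h2⟩
          refine ⟨by simpa [backshift_apply, zero_sub] using h1, fun j hj => ?_⟩
          have h3 := h2 (j + k) (by omega)
          simpa [backshift_apply] using h3
        · rintro ⟨h1, h2⟩
          refine ⟨by simpa [backshift_apply, zero_sub] using h1, fun j hj => ?_⟩
          have h3 := h2 (j - k) (by omega)
          simpa [backshift_apply] using h3
      have hIA : backshift (k : ℤ) y ∈ IAset (k : ℤ) ↔ y ∈ IAset 0 := by
        rw [mem_IAset, mem_IAset, infargmaxAt_backshift, sub_self]
      have hT : backshift (k : ℤ) y ∈ TendSet V ↔ y ∈ TendSet V :=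
        tendSet_backshift_iff
      simp only [mem_inter_iff, hFE, hIA, hT]
    have hAmeas := hmeasD1 k
    have hBmeas := hmeasD2 k
    calc ∫⁻ y in FEset 0 ∩ IAset (k : ℤ) ∩ TendSet V, K y ∂ν
        = ∫⁻ y, ((FEset 0 ∩ IAset (k : ℤ) ∩ TendSet V).indicator K) y ∂ν :=
          (lintegral_indicator hAmeas K).symm
      _ = ∫⁻ y, ((FEset 0 ∩ IAset (k : ℤ) ∩ TendSet V).indicator K) y
            ∂(ν.map (backshift (k : ℤ))) := by
          rw [map_backshift_int ν hνshift]
      _ = ∫⁻ y, ((FEset 0 ∩ IAset (k : ℤ) ∩ TendSet V).indicator K)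
            (backshift (k : ℤ) y) ∂ν :=
          lintegral_map (hK.indicator hAmeas) (measurable_backshift _)
      _ = ∫⁻ y, ((FEset (-(k : ℤ)) ∩ IAset 0 ∩ TendSet V).indicator K) y ∂ν := by
          congr 1
          funext y
          by_cases h : y ∈ FEset (-(k : ℤ)) ∩ IAset 0 ∩ TendSet V
          · rw [Set.indicator_of_mem h, Set.indicator_of_mem ((hmemiff y).mpr h), hKk]
          · rw [Set.indicator_of_notMem h,
              Set.indicator_of_notMem (fun hc => h ((hmemiff y).mp hc))]
      _ = ∫⁻ y in FEset (-(k : ℤ)) ∩ IAset 0 ∩ TendSet V, K y ∂ν :=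
          lintegral_indicator hBmeas K
  -- ### Step 5: conclude
  rw [hLHS, hRHS, hdecomp1, hdecomp2,
    lintegral_iUnion hmeasD1 hdisj1 K, lintegral_iUnion hmeasD2 hdisj2 K]
  exact tsum_congr hterm
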